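/- arXiv:1409.7458 — 2 statements merged into one kernel-verified Lean document; each statement's English description precedes it below -/
import Mathlib

section
/- For all S ≥ 2 and n ≥ 1, the minimax mean-squared-error risks satisfy R_H(S²,n) ≤ 3 · ( 2·R_H(S,n) + R_I(S,n) ); equivalently, R_I(S,n) ≥ R_H(S²,n)/3 − 2·R_H(S,n). Here R_I(S,n) is the minimax risk for estimating the mutual information of a joint pmf on [S]×[S] from n i.i.d. pair samples, and R_H(m,n) is the minimax risk for estimating the entropy of a pmf on an alphabet of size m from n i.i.d. samples (identifying the alphabet [S]×[S] with an alphabet of size S²). -/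
/-- Shannon entropy of a pmf `P` on a finite alphabet, with natural logarithm and the
convention `0 ln 0 = 0`. -/
noncomputable def entropy {A : Type*} [Fintype A] (P : A → ℝ) : ℝ :=
  ∑ a, -(P a * Real.log (P a))

/-- Mutual information of a joint pmf `P` on `A × B`: `I(P) = H(P1) + H(P2) − H(P)`. -/
noncomputable def mutualInfo {A B : Type*} [Fintype A] [Fintype B] (P : A × B → ℝ) : ℝ :=
  entropy (fun a => ∑ b, P (a, b)) + entropy (fun b => ∑ a, P (a, b)) - entropy P

/-- Expectation of `f(W^n)` when `W^n = (W_1,…,W_n)` is drawn i.i.d. from the pmf `P`. -/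
noncomputable def expectIID {A : Type*} [Fintype A] {n : ℕ} (P : A → ℝ)
    (f : (Fin n → A) → ℝ) : ℝ :=
  ∑ w : Fin n → A, (∏ k, P (w k)) * f w

/-- `P` is a probability mass function on the finite alphabet `A`. -/
def IsPmf {A : Type*} [Fintype A] (P : A → ℝ) : Prop :=
  (∀ a, 0 ≤ P a) ∧ ∑ a, P a = 1

/-- Minimax mean-squared-error risk for estimating the entropy of a pmf on the alphabet `A`
from `n` i.i.d. samples. -/
noncomputable def entropyRisk (A : Type*) [Fintype A] (n : ℕ) : ℝ :=
  ⨅ f : (Fin n → A) → ℝ, ⨆ Q : {Q : A → ℝ // IsPmf Q},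
    expectIID Q.1 (fun w => (f w - entropy Q.1) ^ 2)

/-- Minimax mean-squared-error risk for estimating the mutual information of a joint pmf on
`[S] × [S]` from `n` i.i.d. pair samples. -/
noncomputable def miRisk (S n : ℕ) : ℝ :=
  ⨅ f : (Fin n → Fin S × Fin S) → ℝ, ⨆ P : {P : Fin S × Fin S → ℝ // IsPmf P},
    expectIID P.1 (fun z => (f z - mutualInfo P.1) ^ 2)

/-! ### Auxiliary lemmas -/

section Aux

variable {A B : Type*} [Fintype A] [Fintype B] {n : ℕ}

lemma sum_prod_pmf {P : A → ℝ} (hP : IsPmf P) (n : ℕ) :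
    ∑ w : Fin n → A, ∏ k, P (w k) = 1 := by
  rw [← Fintype.piFinset_univ, ← Finset.prod_univ_sum]
  simp [hP.2]

lemma expect_nonneg {P : A → ℝ} (hP : IsPmf P) {f : (Fin n → A) → ℝ}
    (hf : ∀ w, 0 ≤ f w) : 0 ≤ expectIID P f :=
  Finset.sum_nonneg fun w _ =>
    mul_nonneg (Finset.prod_nonneg fun k _ => hP.1 _) (hf w)

lemma expect_le_const {P : A → ℝ} (hP : IsPmf P) {f : (Fin n → A) → ℝ} {c : ℝ}
    (hf : ∀ w, f w ≤ c) : expectIID P f ≤ c := by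
  calc expectIID P f ≤ ∑ w : Fin n → A, (∏ k, P (w k)) * c :=
        Finset.sum_le_sum fun w _ =>
          mul_le_mul_of_nonneg_left (hf w) (Finset.prod_nonneg fun k _ => hP.1 _)
    _ = c := by rw [← Finset.sum_mul, sum_prod_pmf hP, one_mul]

lemma expect_mono {P : A → ℝ} (hP : IsPmf P) {f g : (Fin n → A) → ℝ}
    (h : ∀ w, f w ≤ g w) : expectIID P f ≤ expectIID P g :=
  Finset.sum_le_sum fun w _ =>
    mul_le_mul_of_nonneg_left (h w) (Finset.prod_nonneg fun k _ => hP.1 _)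

lemma expect_comb (P : A → ℝ) (a b c : (Fin n → A) → ℝ) :
    expectIID P (fun w => 3 * a w + 3 * b w + 3 * c w)
      = 3 * expectIID P a + 3 * expectIID P b + 3 * expectIID P c := by
  unfold expectIID
  rw [Finset.mul_sum, Finset.mul_sum, Finset.mul_sum, ← Finset.sum_add_distrib,
    ← Finset.sum_add_distrib]
  exact Finset.sum_congr rfl fun w _ => by ring

lemma expect_fst (P : A × B → ℝ) (f : (Fin n → A) → ℝ) :
    expectIID P (fun w => f (fun k => (w k).1))
      = expectIID (fun a => ∑ b, P (a, b)) f := by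
  unfold expectIID
  rw [← Equiv.sum_comp (Equiv.arrowProdEquivProdArrow (Fin n) (fun _ => A) (fun _ => B)).symm, Fintype.sum_prod_type]
  refine Finset.sum_congr rfl fun v _ => ?_
  simp only [Equiv.arrowProdEquivProdArrow, Equiv.coe_fn_symm_mk]
  rw [← Finset.sum_mul]
  congr 1
  rw [Finset.prod_univ_sum, Fintype.piFinset_univ]

lemma expect_snd (P : A × B → ℝ) (f : (Fin n → B) → ℝ) :
    expectIID P (fun w => f (fun k => (w k).2))
      = expectIID (fun b => ∑ a, P (a, b)) f := by
  have := expect_fst (fun p : B × A => P (p.2, p.1)) f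
  rw [← this]
  unfold expectIID
  rw [← Equiv.sum_comp (Equiv.arrowCongr (Equiv.refl (Fin n)) (Equiv.prodComm A B))]
  simp

lemma isPmf_fst {P : A × B → ℝ} (hP : IsPmf P) : IsPmf fun a => ∑ b, P (a, b) :=
  ⟨fun a => Finset.sum_nonneg fun b _ => hP.1 _, by
    rw [← Fintype.sum_prod_type]; exact hP.2⟩

lemma isPmf_snd {P : A × B → ℝ} (hP : IsPmf P) : IsPmf fun b => ∑ a, P (a, b) :=
  ⟨fun b => Finset.sum_nonneg fun a _ => hP.1 _, by
    rw [← Fintype.sum_prod_type_right]; exact hP.2⟩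

lemma negMulLog_mem {p : ℝ} (hp : 0 ≤ p) (hp1 : p ≤ 1) :
    0 ≤ -(p * Real.log p) ∧ -(p * Real.log p) ≤ 1 := by
  rcases eq_or_lt_of_le hp with h | h
  · simp [← h]
  · constructor
    · have := Real.log_nonpos (le_of_lt h) hp1
      nlinarith
    · have h2 : Real.log p⁻¹ ≤ p⁻¹ - 1 := Real.log_le_sub_one_of_pos (by positivity)
      rw [Real.log_inv] at h2
      have h3 : p * (-Real.log p) ≤ p * (p⁻¹ - 1) :=
        mul_le_mul_of_nonneg_left h2 hp
      have h4 : p * (p⁻¹ - 1) = 1 - p := by field_simp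
      nlinarith

lemma entropy_nonneg {P : A → ℝ} (hP : IsPmf P) : 0 ≤ entropy P := by
  refine Finset.sum_nonneg fun a _ => ?_
  have h1 : P a ≤ 1 := by
    rw [← hP.2]; exact Finset.single_le_sum (fun i _ => hP.1 i) (Finset.mem_univ a)
  exact (negMulLog_mem (hP.1 a) h1).1

lemma entropy_le_card {P : A → ℝ} (hP : IsPmf P) : entropy P ≤ Fintype.card A := by
  calc entropy P ≤ ∑ _a : A, (1 : ℝ) := by
        refine Finset.sum_le_sum fun a _ => ?_
        have h1 : P a ≤ 1 := by
          rw [← hP.2]; exact Finset.single_le_sum (fun i _ => hP.1 i) (Finset.mem_univ a)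
        exact (negMulLog_mem (hP.1 a) h1).2
    _ = Fintype.card A := by simp

lemma abs_entropy_le {P : A → ℝ} (hP : IsPmf P) : |entropy P| ≤ Fintype.card A := by
  have h1 := entropy_nonneg hP
  have h2 : (0:ℝ) ≤ Fintype.card A := Nat.cast_nonneg _
  exact abs_le.2 ⟨by linarith, entropy_le_card hP⟩

lemma abs_mutualInfo_le {P : A × B → ℝ} (hP : IsPmf P) :
    |mutualInfo P| ≤ Fintype.card A + Fintype.card B + Fintype.card (A × B) := by
  have h1 := entropy_nonneg (isPmf_fst hP)
  have h2 := entropy_le_card (isPmf_fst hP)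
  have h3 := entropy_nonneg (isPmf_snd hP)
  have h4 := entropy_le_card (isPmf_snd hP)
  have h5 := entropy_nonneg hP
  have h6 := entropy_le_card hP
  have hA : (0:ℝ) ≤ Fintype.card A := Nat.cast_nonneg _
  have hB : (0:ℝ) ≤ Fintype.card B := Nat.cast_nonneg _
  have hAB : (0:ℝ) ≤ Fintype.card (A × B) := Nat.cast_nonneg _
  unfold mutualInfo
  rw [abs_le]
  constructor <;> linarith

lemma uniform_isPmf [Nonempty A] : IsPmf fun _ : A => (Fintype.card A : ℝ)⁻¹ := by
  have hc : (0:ℝ) < Fintype.card A := by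
    exact_mod_cast Fintype.card_pos
  constructor
  · intro a; positivity
  · rw [Finset.sum_const, Finset.card_univ, nsmul_eq_mul, mul_inv_cancel₀ (ne_of_gt hc)]

lemma risk_bddAbove [Nonempty A] (f : (Fin n → A) → ℝ)
    (T : {Q : A → ℝ // IsPmf Q} → ℝ) (L : ℝ) (hT : ∀ Q, |T Q| ≤ L) :
    BddAbove (Set.range fun Q : {Q : A → ℝ // IsPmf Q} =>
      expectIID Q.1 fun w => (f w - T Q) ^ 2) := by
  obtain ⟨M, hM⟩ : ∃ M, ∀ w : Fin n → A, |f w| ≤ M :=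
    ⟨Finset.univ.sup' Finset.univ_nonempty (fun w => |f w|),
      fun w => Finset.le_sup' (fun w => |f w|) (Finset.mem_univ w)⟩
  refine ⟨(M + L) ^ 2, ?_⟩
  rintro x ⟨Q, rfl⟩
  refine expect_le_const Q.2 fun w => ?_
  have h1 : |f w - T Q| ≤ M + L :=
    (abs_sub _ _).trans (add_le_add (hM w) (hT Q))
  calc (f w - T Q) ^ 2 = |f w - T Q| ^ 2 := (sq_abs _).symm
    _ ≤ (M + L) ^ 2 := pow_le_pow_left₀ (abs_nonneg _) h1 2

end Aux

/-- `R_H(S²,n) ≤ 3 (2 R_H(S,n) + R_I(S,n))`; equivalently,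
`R_I(S,n) ≥ R_H(S²,n)/3 − 2 R_H(S,n)` (identifying the alphabet of size `S²` with
`[S] × [S]`). -/
theorem entropyRisk_sq_le_three_mul (S n : ℕ) (hS : 2 ≤ S) (hn : 1 ≤ n) :
    entropyRisk (Fin S × Fin S) n ≤ 3 * (2 * entropyRisk (Fin S) n + miRisk S n) ∧
    miRisk S n ≥ entropyRisk (Fin S × Fin S) n / 3 - 2 * entropyRisk (Fin S) n := by
  have hSpos : 0 < S := by omega
  haveI : Nonempty (Fin S) := ⟨⟨0, hSpos⟩⟩
  haveI : Nonempty {Q : Fin S → ℝ // IsPmf Q} := ⟨⟨_, uniform_isPmf⟩⟩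
  haveI : Nonempty {P : Fin S × Fin S → ℝ // IsPmf P} := ⟨⟨_, uniform_isPmf⟩⟩
  have key : entropyRisk (Fin S × Fin S) n ≤ 3 * (2 * entropyRisk (Fin S) n + miRisk S n) := by
    refine le_of_forall_pos_le_add fun ε hε => ?_
    have hδpos : 0 < ε / 9 := by positivity
    obtain ⟨f1, hf1⟩ : ∃ f : (Fin n → Fin S) → ℝ,
        (⨆ Q : {Q : Fin S → ℝ // IsPmf Q},
          expectIID Q.1 fun w => (f w - entropy Q.1) ^ 2) < entropyRisk (Fin S) n + ε / 9 :=
      exists_lt_of_ciInf_lt (lt_add_of_pos_right _ hδpos)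
    obtain ⟨g, hg⟩ : ∃ f : (Fin n → Fin S × Fin S) → ℝ,
        (⨆ P : {P : Fin S × Fin S → ℝ // IsPmf P},
          expectIID P.1 fun z => (f z - mutualInfo P.1) ^ 2) < miRisk S n + ε / 9 :=
      exists_lt_of_ciInf_lt (lt_add_of_pos_right _ hδpos)
    set F : (Fin n → Fin S × Fin S) → ℝ :=
      fun w => f1 (fun k => (w k).1) + f1 (fun k => (w k).2) - g w with hF
    have step1 : entropyRisk (Fin S × Fin S) n ≤
        ⨆ P : {P : Fin S × Fin S → ℝ // IsPmf P},
          expectIID P.1 fun w => (F w - entropy P.1) ^ 2 := by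
      apply ciInf_le
      refine ⟨0, ?_⟩
      rintro x ⟨f, rfl⟩
      exact Real.iSup_nonneg fun P => expect_nonneg P.2 fun w => sq_nonneg _
    have hbddH : BddAbove (Set.range fun Q : {Q : Fin S → ℝ // IsPmf Q} =>
        expectIID Q.1 fun w => (f1 w - entropy Q.1) ^ 2) :=
      risk_bddAbove f1 (fun Q => entropy Q.1) (Fintype.card (Fin S))
        (fun Q => abs_entropy_le Q.2)
    have hbddI : BddAbove (Set.range fun P : {P : Fin S × Fin S → ℝ // IsPmf P} =>
        expectIID P.1 fun z => (g z - mutualInfo P.1) ^ 2) :=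
      risk_bddAbove g (fun P => mutualInfo P.1)
        (Fintype.card (Fin S) + Fintype.card (Fin S) + Fintype.card (Fin S × Fin S))
        (fun P => abs_mutualInfo_le P.2)
    have step2 : (⨆ P : {P : Fin S × Fin S → ℝ // IsPmf P},
          expectIID P.1 fun w => (F w - entropy P.1) ^ 2) ≤
        3 * (2 * entropyRisk (Fin S) n + miRisk S n) + ε := by
      refine ciSup_le fun P => ?_
      have hP1 : IsPmf fun a => ∑ b, P.1 (a, b) := isPmf_fst P.2
      have hP2 : IsPmf fun b => ∑ a, P.1 (a, b) := isPmf_snd P.2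
      have hH : entropy P.1 = entropy (fun a => ∑ b, P.1 (a, b))
          + entropy (fun b => ∑ a, P.1 (a, b)) - mutualInfo P.1 := by
        unfold mutualInfo; ring
      have hpt : ∀ w, (F w - entropy P.1) ^ 2 ≤
          3 * (f1 (fun k => (w k).1) - entropy (fun a => ∑ b, P.1 (a, b))) ^ 2
          + 3 * (f1 (fun k => (w k).2) - entropy (fun b => ∑ a, P.1 (a, b))) ^ 2
          + 3 * (g w - mutualInfo P.1) ^ 2 := by
        intro w
        rw [hF, hH]
        set x := f1 (fun k => (w k).1) - entropy (fun a => ∑ b, P.1 (a, b)) with hx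
        set y := f1 (fun k => (w k).2) - entropy (fun b => ∑ a, P.1 (a, b)) with hy
        set z := g w - mutualInfo P.1 with hz
        have hxyz : f1 (fun k => (w k).1) + f1 (fun k => (w k).2) - g w -
            (entropy (fun a => ∑ b, P.1 (a, b)) + entropy (fun b => ∑ a, P.1 (a, b))
              - mutualInfo P.1) = x + y - z := by rw [hx, hy, hz]; ring
        rw [hxyz]
        nlinarith [sq_nonneg (x - y), sq_nonneg (x + z), sq_nonneg (y + z)]
      have hmono := expect_mono P.2 hpt
      rw [expect_comb] at hmono
      have hb1 : expectIID P.1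
          (fun w => (f1 (fun k => (w k).1) - entropy (fun a => ∑ b, P.1 (a, b))) ^ 2)
          ≤ entropyRisk (Fin S) n + ε / 9 := by
        rw [expect_fst P.1 (fun v => (f1 v - entropy (fun a => ∑ b, P.1 (a, b))) ^ 2)]
        exact le_trans (le_ciSup hbddH ⟨_, hP1⟩) hf1.le
      have hb2 : expectIID P.1
          (fun w => (f1 (fun k => (w k).2) - entropy (fun b => ∑ a, P.1 (a, b))) ^ 2)
          ≤ entropyRisk (Fin S) n + ε / 9 := by
        rw [expect_snd P.1 (fun v => (f1 v - entropy (fun b => ∑ a, P.1 (a, b))) ^ 2)]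
        exact le_trans (le_ciSup hbddH ⟨_, hP2⟩) hf1.le
      have hb3 : expectIID P.1 (fun z => (g z - mutualInfo P.1) ^ 2)
          ≤ miRisk S n + ε / 9 :=
        le_trans (le_ciSup hbddI P) hg.le
      linarith
    linarith
  exact ⟨key, by linarith⟩
end

section
/- (Optimality of the tree projection.) Let d ≥ 2, let X_1, …, X_d be finite nonempty alphabets, let P be a pmf on X_1 × ⋯ × X_d with P(x) > 0 for all x, and let T be a rooted spanning tree on {1,…,d} with root r and parent map π. Let Q be any pmf on X_1 × ⋯ × X_d with Q(x) > 0 for all x that factorizes along T, i.e., Q(x) = Q_{X_r}(x_r) · Π_{i ≠ r} Q_{X_i | X_{π(i)}}(x_i | x_{π(i)}). Then D(P ‖ Q) ≥ D(P ‖ Q_T), where Q_T(x) = P_{X_r}(x_r) · Π_{i ≠ r} P_{X_i | X_{π(i)}}(x_i | x_{π(i)}) is the projection of P onto the tree T built from P's own marginals and conditionals. -/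
/-- Kullback–Leibler divergence `D(P ‖ Q) = Σ_{a : P(a) > 0} P(a) ln(P(a)/Q(a))`. -/
noncomputable def klDiv {A : Type*} [Fintype A] (P Q : A → ℝ) : ℝ :=
  ∑ a ∈ Finset.univ.filter (fun a => 0 < P a), P a * Real.log (P a / Q a)

/-- One-coordinate marginal `P_{X_i}` of a pmf `P` on a finite product. -/
noncomputable def marg {d : ℕ} {X : Fin d → Type*} [∀ i, Fintype (X i)]
    [∀ i, DecidableEq (X i)] (P : (∀ i, X i) → ℝ) (i : Fin d) : X i → ℝ :=
  fun a => ∑ x : ∀ j, X j, if x i = a then P x else 0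

/-- Two-coordinate marginal `P_{X_i, X_j}` of a pmf `P` on a finite product. -/
noncomputable def pairMarg {d : ℕ} {X : Fin d → Type*} [∀ i, Fintype (X i)]
    [∀ i, DecidableEq (X i)] (P : (∀ i, X i) → ℝ) (i j : Fin d) : X i × X j → ℝ :=
  fun p => ∑ x : ∀ j', X j', if x i = p.1 ∧ x j = p.2 then P x else 0

/-- Conditional pmf `P_{X_i | X_j}(a | b) = P_{X_i,X_j}(a,b) / P_{X_j}(b)`. -/
noncomputable def condProb {d : ℕ} {X : Fin d → Type*} [∀ i, Fintype (X i)]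
    [∀ i, DecidableEq (X i)] (P : (∀ i, X i) → ℝ) (i j : Fin d) (a : X i) (b : X j) : ℝ :=
  pairMarg P i j (a, b) / marg P j b

/-- The projection of `P` onto the rooted spanning tree with root `r` and parent map `π`:
`Q_T(x) = P_{X_r}(x_r) · Π_{i ≠ r} P_{X_i | X_{π(i)}}(x_i | x_{π(i)})`. -/
noncomputable def treeProj {d : ℕ} {X : Fin d → Type*} [∀ i, Fintype (X i)]
    [∀ i, DecidableEq (X i)] (P : (∀ i, X i) → ℝ) (r : Fin d) (π : Fin d → Fin d) :
    (∀ i, X i) → ℝ :=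
  fun x => marg P r (x r) *
    ∏ i ∈ Finset.univ.filter (fun i => i ≠ r), condProb P i (π i) (x i) (x (π i))

section aux
variable {d : ℕ} {X : Fin d → Type*} [∀ i, Fintype (X i)] [∀ i, Nonempty (X i)]
  [∀ i, DecidableEq (X i)]

lemma aux_marg_pos (P : (∀ i, X i) → ℝ) (hP : ∀ x, 0 < P x) (j : Fin d) (b : X j) :
    0 < marg P j b := by
  classical
  refine Finset.sum_pos' (fun x _ => by split_ifs with h; exacts [(hP x).le, le_rfl]) ?_
  refine ⟨Function.update (Classical.arbitrary _) j b, Finset.mem_univ _, ?_⟩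
  simpa using (hP _)

lemma aux_pairMarg_pos (P : (∀ i, X i) → ℝ) (hP : ∀ x, 0 < P x) (i j : Fin d)
    (hij : i ≠ j) (a : X i) (b : X j) : 0 < pairMarg P i j (a, b) := by
  classical
  refine Finset.sum_pos' (fun x _ => by split_ifs with h; exacts [(hP x).le, le_rfl]) ?_
  refine ⟨Function.update (Function.update (Classical.arbitrary _) i a) j b,
    Finset.mem_univ _, ?_⟩
  rw [if_pos ⟨by rw [Function.update_of_ne hij, Function.update_self],
    Function.update_self _ _ _⟩]
  exact hP _

lemma aux_condProb_pos (P : (∀ i, X i) → ℝ) (hP : ∀ x, 0 < P x) (i j : Fin d)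
    (hij : i ≠ j) (a : X i) (b : X j) : 0 < condProb P i j a b :=
  div_pos (aux_pairMarg_pos P hP i j hij a b) (aux_marg_pos P hP j b)

lemma aux_sum_marg_mul (P : (∀ i, X i) → ℝ) (j : Fin d) (f : X j → ℝ) :
    ∑ b, marg P j b * f b = ∑ x, P x * f (x j) := by
  unfold marg
  simp_rw [Finset.sum_mul, ite_mul, zero_mul]
  rw [Finset.sum_comm]
  exact Finset.sum_congr rfl fun x _ => by simp [Finset.sum_ite_eq]

lemma aux_sum_pairMarg_mul (P : (∀ i, X i) → ℝ) (i j : Fin d) (g : X i → X j → ℝ) :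
    ∑ a, ∑ b, pairMarg P i j (a, b) * g a b = ∑ x, P x * g (x i) (x j) := by
  unfold pairMarg
  simp_rw [Finset.sum_mul, ite_mul, zero_mul]
  have hswap : (∑ a : X i, ∑ b : X j, ∑ x : ∀ k, X k,
      if x i = a ∧ x j = b then P x * g a b else 0)
    = ∑ x : ∀ k, X k, ∑ a : X i, ∑ b : X j,
      if x i = a ∧ x j = b then P x * g a b else 0 :=
    calc (∑ a : X i, ∑ b : X j, ∑ x : ∀ k, X k,
        if x i = a ∧ x j = b then P x * g a b else 0)
        = ∑ a : X i, ∑ x : ∀ k, X k, ∑ b : X j,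
          if x i = a ∧ x j = b then P x * g a b else 0 :=
        Finset.sum_congr rfl fun a _ => Finset.sum_comm
      _ = ∑ x : ∀ k, X k, ∑ a : X i, ∑ b : X j,
          if x i = a ∧ x j = b then P x * g a b else 0 := Finset.sum_comm
  rw [hswap]
  exact Finset.sum_congr rfl fun x _ => by simp [ite_and, Finset.sum_ite_eq]

lemma aux_sum_pairMarg_fst (P : (∀ i, X i) → ℝ) (i j : Fin d) (b : X j) :
    ∑ a, pairMarg P i j (a, b) = marg P j b := by
  unfold pairMarg marg
  rw [Finset.sum_comm]
  exact Finset.sum_congr rfl fun x _ => by simp [ite_and, Finset.sum_ite_eq]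

lemma aux_sum_condProb (Q : (∀ i, X i) → ℝ) (hQ : ∀ x, 0 < Q x) (i j : Fin d) (b : X j) :
    ∑ a, condProb Q i j a b = 1 := by
  unfold condProb
  rw [← Finset.sum_div, aux_sum_pairMarg_fst, div_self (aux_marg_pos Q hQ j b).ne']

lemma aux_sum_marg (P : (∀ i, X i) → ℝ) (j : Fin d) :
    ∑ b, marg P j b = ∑ x, P x := by
  have := aux_sum_marg_mul P j (fun _ => 1)
  simpa using this

lemma aux_key {p m c : ℝ} (hp : 0 < p) (hm : 0 < m) (hc : 0 < c) :
    p - m * c ≤ p * (Real.log (p / m) - Real.log c) := by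
  have h : Real.log (c * m / p) ≤ c * m / p - 1 :=
    Real.log_le_sub_one_of_pos (by positivity)
  rw [Real.log_div (by positivity) hp.ne', Real.log_mul hc.ne' hm.ne'] at h
  rw [Real.log_div hp.ne' hm.ne']
  have h2 := mul_le_mul_of_nonneg_left h hp.le
  have h3 : p * (c * m / p - 1) = c * m - p := by field_simp
  nlinarith [h2, h3]

end aux

/-- Optimality of the tree projection: among all everywhere-positive pmfs `Q` that factorize
along the rooted spanning tree `T` (root `r`, parent map `π`), the projection `Q_T` of `P`
onto `T`, built from `P`'s own marginals and conditionals, minimizes `D(P ‖ ·)`: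
`D(P ‖ Q) ≥ D(P ‖ Q_T)`. -/
theorem klDiv_treeProj_le {d : ℕ} (hd : 2 ≤ d) {X : Fin d → Type*}
    [∀ i, Fintype (X i)] [∀ i, Nonempty (X i)] [∀ i, DecidableEq (X i)]
    (P : (∀ i, X i) → ℝ) (hP1 : ∑ x, P x = 1) (hPpos : ∀ x, 0 < P x)
    (r : Fin d) (π : Fin d → Fin d)
    (htree : ∀ i : Fin d, ∃ k : ℕ, π^[k] i = r)
    (Q : (∀ i, X i) → ℝ) (hQ1 : ∑ x, Q x = 1) (hQpos : ∀ x, 0 < Q x)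
    (hQfact : ∀ x, Q x = marg Q r (x r) *
      ∏ i ∈ Finset.univ.filter (fun i => i ≠ r), condProb Q i (π i) (x i) (x (π i))) :
    klDiv P Q ≥ klDiv P (treeProj P r π) := by
  classical
  have hπ : ∀ i ∈ Finset.univ.filter (fun i : Fin d => i ≠ r), i ≠ π i := by
    intro i hi h
    obtain ⟨k, hk⟩ := htree i
    rw [Function.iterate_fixed h.symm k] at hk
    exact (Finset.mem_filter.mp hi).2 hk
  have hmPpos := aux_marg_pos P hPpos
  have hmQpos := aux_marg_pos Q hQpos
  have hprodP : ∀ x : ∀ i, X i, 0 < ∏ i ∈ Finset.univ.filter (fun i : Fin d => i ≠ r),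
      condProb P i (π i) (x i) (x (π i)) := fun x =>
    Finset.prod_pos fun i hi => aux_condProb_pos P hPpos i (π i) (hπ i hi) _ _
  have hprodQ : ∀ x : ∀ i, X i, 0 < ∏ i ∈ Finset.univ.filter (fun i : Fin d => i ≠ r),
      condProb Q i (π i) (x i) (x (π i)) := fun x =>
    Finset.prod_pos fun i hi => aux_condProb_pos Q hQpos i (π i) (hπ i hi) _ _
  have hQT : ∀ x, 0 < treeProj P r π x := fun x => mul_pos (hmPpos r (x r)) (hprodP x)
  have hfilter : (Finset.univ.filter fun x : (∀ i, X i) => 0 < P x) = Finset.univ :=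
    Finset.filter_true_of_mem fun x _ => hPpos x
  rw [ge_iff_le, ← sub_nonneg]
  have hdiff : klDiv P Q - klDiv P (treeProj P r π)
      = ∑ x, P x * (Real.log (treeProj P r π x) - Real.log (Q x)) := by
    rw [klDiv, klDiv, hfilter, ← Finset.sum_sub_distrib]
    refine Finset.sum_congr rfl fun x _ => ?_
    rw [Real.log_div (hPpos x).ne' (hQpos x).ne',
        Real.log_div (hPpos x).ne' (hQT x).ne']
    ring
  rw [hdiff]
  have hexp : ∀ x : ∀ i, X i, Real.log (treeProj P r π x) - Real.log (Q x)
      = (Real.log (marg P r (x r)) - Real.log (marg Q r (x r)))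
        + ∑ i ∈ Finset.univ.filter (fun i : Fin d => i ≠ r),
          (Real.log (condProb P i (π i) (x i) (x (π i)))
            - Real.log (condProb Q i (π i) (x i) (x (π i)))) := by
    intro x
    rw [show treeProj P r π x = marg P r (x r) *
        ∏ i ∈ Finset.univ.filter (fun i : Fin d => i ≠ r),
          condProb P i (π i) (x i) (x (π i)) from rfl, hQfact x,
      Real.log_mul (hmPpos r (x r)).ne' (hprodP x).ne',
      Real.log_mul (hmQpos r (x r)).ne' (hprodQ x).ne',
      Real.log_prod (fun i hi => (aux_condProb_pos P hPpos i (π i) (hπ i hi) _ _).ne'),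
      Real.log_prod (fun i hi => (aux_condProb_pos Q hQpos i (π i) (hπ i hi) _ _).ne'),
      Finset.sum_sub_distrib]
    ring
  simp_rw [hexp, mul_add, Finset.mul_sum, Finset.sum_add_distrib]
  have hroot : 0 ≤ ∑ x, P x * (Real.log (marg P r (x r)) - Real.log (marg Q r (x r))) := by
    rw [← aux_sum_marg_mul P r (fun a => Real.log (marg P r a) - Real.log (marg Q r a))]
    have hbound : ∀ a : X r, marg P r a - marg Q r a
        ≤ marg P r a * (Real.log (marg P r a) - Real.log (marg Q r a)) := by
      intro a
      have := aux_key (hmPpos r a) one_pos (hmQpos r a)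
      simpa using this
    calc (0:ℝ) = ∑ a, (marg P r a - marg Q r a) := by
          rw [Finset.sum_sub_distrib, aux_sum_marg, aux_sum_marg, hP1, hQ1, sub_self]
      _ ≤ _ := Finset.sum_le_sum fun a _ => hbound a
  have hpair : ∀ i ∈ Finset.univ.filter (fun i : Fin d => i ≠ r),
      0 ≤ ∑ x, P x * (Real.log (condProb P i (π i) (x i) (x (π i)))
        - Real.log (condProb Q i (π i) (x i) (x (π i)))) := by
    intro i hi
    have hij := hπ i hi
    rw [← aux_sum_pairMarg_mul P i (π i) (fun a b =>
      Real.log (condProb P i (π i) a b) - Real.log (condProb Q i (π i) a b))]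
    have hbound : ∀ (a : X i) (b : X (π i)),
        pairMarg P i (π i) (a, b) - marg P (π i) b * condProb Q i (π i) a b
        ≤ pairMarg P i (π i) (a, b) * (Real.log (condProb P i (π i) a b)
          - Real.log (condProb Q i (π i) a b)) := by
      intro a b
      have := aux_key (aux_pairMarg_pos P hPpos i (π i) hij a b)
        (hmPpos (π i) b) (aux_condProb_pos Q hQpos i (π i) hij a b)
      simpa [condProb] using this
    calc (0:ℝ) = ∑ a, ∑ b, (pairMarg P i (π i) (a, b)
          - marg P (π i) b * condProb Q i (π i) a b) := by
          rw [Finset.sum_comm]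
          symm
          refine Finset.sum_eq_zero fun b _ => ?_
          rw [Finset.sum_sub_distrib, aux_sum_pairMarg_fst, ← Finset.mul_sum,
            aux_sum_condProb Q hQpos i (π i) b, mul_one, sub_self]
      _ ≤ _ := Finset.sum_le_sum fun a _ => Finset.sum_le_sum fun b _ => hbound a b
  have hsum2 : (∑ x : ∀ i, X i, ∑ i ∈ Finset.univ.filter (fun i : Fin d => i ≠ r),
      P x * (Real.log (condProb P i (π i) (x i) (x (π i)))
        - Real.log (condProb Q i (π i) (x i) (x (π i)))))
      = ∑ i ∈ Finset.univ.filter (fun i : Fin d => i ≠ r),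
        ∑ x : ∀ i, X i, P x * (Real.log (condProb P i (π i) (x i) (x (π i)))
          - Real.log (condProb Q i (π i) (x i) (x (π i)))) := Finset.sum_comm
  rw [hsum2]
  exact add_nonneg hroot (Finset.sum_nonneg hpair)
end
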